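/- Let N be odd and let g and h be monic divisors of X^N - 1 in (Z/4Z)[X] with gcd(g, h) = 1. If the set of monic irreducible factors of h* equals the union of the sets of monic irreducible factors of g and of h, then g = 1 and h is self-reciprocal. -/

import Mathlib

open Polynomial

/-- The reciprocal polynomial `f*(X) = a0⁻¹ X^(deg f) f(1/X)` over `ZMod 4`. -/
noncomputable def recip (f : (ZMod 4)[X]) : (ZMod 4)[X] :=
  C (f.coeff 0)⁻¹ * f.reverse

namespace Z4aux

instance : Nontrivial (ZMod 4) := ⟨0, 1, by decide⟩

abbrev pr : ZMod 4 →+* ZMod 2 := ZMod.castHom (show 2 ∣ 4 by norm_num) (ZMod 2)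

noncomputable abbrev red (f : (ZMod 4)[X]) : (ZMod 2)[X] := f.map pr

lemma pr_val (x : ZMod 4) : pr x = ((x.val : ℕ) : ZMod 2) := by
  rw [ZMod.castHom_apply, ← ZMod.natCast_val x]

lemma four_eq_zero : (4 : (ZMod 4)[X]) = 0 := by
  rw [← map_ofNat (C : ZMod 4 →+* (ZMod 4)[X]) 4, show (4:ZMod 4) = 0 by decide, map_zero]

lemma red_zero_iff (w : (ZMod 4)[X]) : red w = 0 ↔ ∃ v, w = 2 * v := by
  have hker : RingHom.ker (pr) = Ideal.span {(2 : ZMod 4)} := by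
    ext x
    simp only [RingHom.mem_ker, Ideal.mem_span_singleton, dvd_def, pr_val]
    revert x; decide
  have h1 : red w = 0 ↔ w ∈ RingHom.ker (mapRingHom pr) := by
    simp [RingHom.mem_ker, red]
  rw [h1, Polynomial.ker_mapRingHom, hker, Ideal.map_span]
  simp only [Set.image_singleton, Ideal.mem_span_singleton]
  constructor
  · rintro ⟨v, hv⟩; exact ⟨v, by simpa [Polynomial.C_eq_natCast, map_ofNat (C : ZMod 4 →+* (ZMod 4)[X]) 2] using hv⟩
  · rintro ⟨v, hv⟩; exact ⟨v, by simpa [Polynomial.C_eq_natCast, map_ofNat (C : ZMod 4 →+* (ZMod 4)[X]) 2] using hv⟩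

lemma two_mul_congr {x y : (ZMod 4)[X]} (h : red x = red y) : 2 * x = 2 * y := by
  have : red (x - y) = 0 := by simp [red, Polynomial.map_sub, h]
  obtain ⟨v, hv⟩ := (red_zero_iff _).1 this
  have h2 : 2 * (x - y) = 2 * (2 * v) := by rw [hv]
  have h4 : (2 : (ZMod 4)[X]) * (2 * v) = 0 := by
    rw [← mul_assoc, show (2:(ZMod 4)[X]) * 2 = 4 by norm_num, four_eq_zero, zero_mul]
  have h5 := h2.trans h4
  linear_combination h5

lemma two_mul_eq_zero_iff (x : (ZMod 4)[X]) : 2 * x = 0 ↔ red x = 0 := by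
  constructor
  · intro hx
    ext i
    have h1 : (2 * x).coeff i = 0 := by rw [hx]; simp
    have h2 : (2 : ZMod 4) * x.coeff i = 0 := by
      rw [show (2:(ZMod 4)[X]) = C 2 by rw [← map_ofNat (C : ZMod 4 →+* (ZMod 4)[X]) 2]] at h1
      simpa [Polynomial.coeff_C_mul] using h1
    have h3 : pr (x.coeff i) = 0 := by
      rw [pr_val]; revert h2; generalize x.coeff i = a; revert a; decide
    simpa [red] using h3
  · intro hx
    have := two_mul_congr (x := x) (y := 0) (by simpa [red] using hx)
    simpa using this

lemma unit_lift {a : (ZMod 4)[X]} (h : IsUnit (red a)) : IsUnit a := by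
  obtain ⟨r, hr, hC⟩ := Polynomial.isUnit_iff.1 h
  have hr1 : r = 1 := by
    by_cases h0 : r = 0
    · exact absurd hr (by simp [h0])
    · have : ∀ s : ZMod 2, ¬ s = 0 → s = 1 := by decide
      exact this r h0
  have hred : red a = 1 := by rw [← hC, hr1, map_one]
  have : red (a - 1) = 0 := by simp [red, Polynomial.map_sub, hred]
  obtain ⟨v, hv⟩ := (red_zero_iff _).1 this
  have ha : a = 1 + 2 * v := by linear_combination hv
  refine IsUnit.of_mul_eq_one (a := a) (1 - 2 * v) ?_
  rw [ha]
  have h4 : (2:(ZMod 4)[X]) * 2 = 0 := by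
    rw [show (2:(ZMod 4)[X]) * 2 = 4 by norm_num, four_eq_zero]
  linear_combination (-(v*v) : (ZMod 4)[X]) * h4

end Z4aux

namespace Z4aux

lemma red_surjective : Function.Surjective (red) :=
  Polynomial.map_surjective pr (ZMod.ringHom_surjective pr)

lemma exists_monic_lift (q : (ZMod 2)[X]) (hq : q.Monic) :
    ∃ Q : (ZMod 4)[X], Q.Monic ∧ red Q = q := by
  obtain ⟨q₁, hq₁⟩ := red_surjective q
  set n := q.natDegree with hn
  refine ⟨X ^ n + q₁ %ₘ (X ^ n), ?_, ?_⟩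
  · exact (monic_X_pow n).add_of_left
      (degree_modByMonic_lt q₁ (monic_X_pow n))
  · have hmod : red (q₁ %ₘ (X ^ n)) = q %ₘ (X ^ n) := by
      rw [red, Polynomial.map_modByMonic pr (monic_X_pow n)]
      simp [hq₁, red]
    have hqmod : q %ₘ (X ^ n : (ZMod 2)[X]) = q - X ^ n := by
      refine (Polynomial.div_modByMonic_unique 1 (q - X ^ n) (monic_X_pow n)
        ⟨by ring, ?_⟩).2
      have h1 : degree q = degree (X ^ n : (ZMod 2)[X]) := by
        rw [degree_X_pow, Polynomial.degree_eq_natDegree hq.ne_zero]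
      calc degree (q - X ^ n) < degree q :=
            degree_sub_lt h1 hq.ne_zero (by simp [hq.leadingCoeff])
        _ = degree (X ^ n : (ZMod 2)[X]) := h1
    rw [red] at hmod ⊢
    rw [Polynomial.map_add, Polynomial.map_pow, Polynomial.map_X, hmod, hqmod]
    ring

end Z4aux

namespace Z4aux

lemma two_zmod2 : (2 : (ZMod 2)[X]) = 0 := by
  rw [← map_ofNat (Polynomial.C : ZMod 2 →+* (ZMod 2)[X]) 2, show (2:ZMod 2) = 0 by decide,
    map_zero]

lemma red_two_mul (x : (ZMod 4)[X]) : red (2 * x) = 0 := by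
  rw [red, Polynomial.map_mul, Polynomial.map_ofNat, two_zmod2, zero_mul]

lemma degree_two_mul_le (x : (ZMod 4)[X]) : (2 * x).degree ≤ x.degree := by
  rw [show (2:(ZMod 4)[X]) * x = C 2 * x by
    rw [← map_ofNat (Polynomial.C : ZMod 4 →+* (ZMod 4)[X]) 2]]
  refine le_trans (Polynomial.degree_mul_le _ _) ?_
  refine le_trans (add_le_add_left Polynomial.degree_C_le _) ?_
  simp

lemma hensel_factor {f : (ZMod 4)[X]} (hf : f.Monic) {q r : (ZMod 2)[X]}
    (hq : q.Monic) (hr : r.Monic) (hfqr : red f = q * r) (hcop : IsCoprime q r) :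
    ∃ Q R : (ZMod 4)[X], Q.Monic ∧ R.Monic ∧ f = Q * R ∧ red Q = q ∧ red R = r := by
  obtain ⟨q₀, hq₀, hq₀red⟩ := exists_monic_lift q hq
  obtain ⟨r₀, hr₀, hr₀red⟩ := exists_monic_lift r hr
  have hered : red (f - q₀ * r₀) = 0 := by
    rw [red, Polynomial.map_sub, Polynomial.map_mul]
    rw [red] at hq₀red hr₀red
    rw [hq₀red, hr₀red, ← hfqr, red, sub_self]
  obtain ⟨ε, hε⟩ := (red_zero_iff _).1 hered
  set ebar : (ZMod 2)[X] := red ε with hebar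
  have hdf : f.natDegree = q.natDegree + r.natDegree := by
    have h1 : (red f).natDegree = f.natDegree := hf.natDegree_map pr
    rw [← h1, hfqr, Polynomial.Monic.natDegree_mul hq hr]
  have hq₀deg : q₀.natDegree = q.natDegree := by
    rw [← hq₀.natDegree_map pr]; rw [red] at hq₀red; rw [hq₀red]
  have hr₀deg : r₀.natDegree = r.natDegree := by
    rw [← hr₀.natDegree_map pr]; rw [red] at hr₀red; rw [hr₀red]
  have hebar_deg : ebar.degree < ((q.natDegree + r.natDegree : ℕ) : WithBot ℕ) := by
    rw [Polynomial.degree_lt_iff_coeff_zero]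
    intro m hm
    have hecoeff : (f - q₀ * r₀).coeff m = 0 := by
      have hqr : (q₀ * r₀).Monic := hq₀.mul hr₀
      have hdeg' : (q₀ * r₀).natDegree = q.natDegree + r.natDegree := by
        rw [Polynomial.Monic.natDegree_mul hq₀ hr₀, hq₀deg, hr₀deg]
      rcases eq_or_lt_of_le hm with heq | hlt
      · rw [coeff_sub, ← heq, ← hdf, hf.coeff_natDegree, hdf, ← hdeg',
          hqr.coeff_natDegree, sub_self]
      · rw [coeff_sub,
          Polynomial.coeff_eq_zero_of_natDegree_lt (by omega : f.natDegree < m),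
          Polynomial.coeff_eq_zero_of_natDegree_lt (by omega : (q₀*r₀).natDegree < m), sub_self]
    have h2 : (2 : ZMod 4) * ε.coeff m = 0 := by
      have hcoe := congrArg (fun p => Polynomial.coeff p m) hε
      simp only [hecoeff] at hcoe
      rw [show ((2:(ZMod 4)[X]) * ε) = C 2 * ε by
        rw [← map_ofNat (Polynomial.C : ZMod 4 →+* (ZMod 4)[X]) 2], Polynomial.coeff_C_mul]
        at hcoe
      exact hcoe.symm
    have h3 : pr (ε.coeff m) = 0 := by
      rw [pr_val]; revert h2; generalize ε.coeff m = a; revert a; decide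
    simpa [hebar, red] using h3
  obtain ⟨u, v, huv⟩ := hcop
  set c := (ebar * v) /ₘ q with hc
  set sbar := (ebar * v) %ₘ q with hsbar
  have hkey : sbar + q * c = ebar * v := Polynomial.modByMonic_add_div (ebar * v) q
  set tbar := ebar * u + c * r with htbar
  have hident : sbar * r + tbar * q = ebar := by
    have h1 : sbar = ebar * v - q * c := by linear_combination hkey
    rw [h1, htbar]
    linear_combination ebar * huv
  have hsdeg : sbar.degree < q.degree := degree_modByMonic_lt _ hq
  have hdq : q.degree = (q.natDegree : WithBot ℕ) := Polynomial.degree_eq_natDegree hq.ne_zero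
  have hdr : r.degree = (r.natDegree : WithBot ℕ) := Polynomial.degree_eq_natDegree hr.ne_zero
  have htdeg : tbar.degree < r.degree := by
    by_cases ht0 : tbar = 0
    · rw [ht0, Polynomial.degree_zero, hdr]
      exact WithBot.bot_lt_coe _
    · have hmul : tbar * q = ebar - sbar * r := by linear_combination hident
      have hlt : (tbar * q).degree < ((q.natDegree + r.natDegree : ℕ) : WithBot ℕ) := by
        rw [hmul]
        refine lt_of_le_of_lt (Polynomial.degree_sub_le _ _) (max_lt hebar_deg ?_)
        refine lt_of_le_of_lt (Polynomial.degree_mul_le _ _) ?_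
        rw [hdr]
        calc sbar.degree + (r.natDegree : WithBot ℕ)
            < (q.natDegree : WithBot ℕ) + (r.natDegree : WithBot ℕ) :=
              WithBot.add_lt_add_right (by simp) (hdq ▸ hsdeg)
          _ = (((q.natDegree + r.natDegree : ℕ)) : WithBot ℕ) := by push_cast; ring
      rw [Polynomial.degree_mul, hdq] at hlt
      rw [show (((q.natDegree + r.natDegree : ℕ)) : WithBot ℕ)
          = (r.natDegree : WithBot ℕ) + (q.natDegree : WithBot ℕ) by push_cast; ring] at hlt
      rw [hdr]
      exact (WithBot.add_lt_add_iff_right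
        (by simp : (q.natDegree : WithBot ℕ) ≠ ⊥)).1 hlt
  obtain ⟨s₁, hs₁⟩ := red_surjective sbar
  obtain ⟨t₁, ht₁⟩ := red_surjective tbar
  set s := s₁ %ₘ q₀ with hs
  set t := t₁ %ₘ r₀ with ht
  have hsred : red s = sbar := by
    rw [hs, red, Polynomial.map_modByMonic pr hq₀]
    rw [red] at hs₁ hq₀red; rw [hs₁, hq₀red]
    exact (Polynomial.modByMonic_eq_self_iff hq).2 hsdeg
  have htred : red t = tbar := by
    rw [ht, red, Polynomial.map_modByMonic pr hr₀]
    rw [red] at ht₁ hr₀red; rw [ht₁, hr₀red]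
    exact (Polynomial.modByMonic_eq_self_iff hr).2 htdeg
  refine ⟨q₀ + 2 * s, r₀ + 2 * t, ?_, ?_, ?_, ?_, ?_⟩
  · exact hq₀.add_of_left
      (lt_of_le_of_lt (degree_two_mul_le s) (degree_modByMonic_lt s₁ hq₀))
  · exact hr₀.add_of_left
      (lt_of_le_of_lt (degree_two_mul_le t) (degree_modByMonic_lt t₁ hr₀))
  · have hredst : red (s * r₀ + t * q₀) = red ε := by
      rw [red, Polynomial.map_add, Polynomial.map_mul, Polynomial.map_mul]
      rw [red] at hsred htred hq₀red hr₀red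
      rw [hsred, htred, hq₀red, hr₀red, ← hebar]
      exact hident
    have h24 : 2 * (s * r₀ + t * q₀) = 2 * ε := two_mul_congr hredst
    have h4 := four_eq_zero
    linear_combination hε - h24 - (s * t) * h4
  · have h1 : red (q₀ + 2 * s) = red q₀ + red (2 * s) := by
      rw [red, Polynomial.map_add]
    rw [h1, red_two_mul, add_zero, hq₀red]
  · have h1 : red (r₀ + 2 * t) = red r₀ + red (2 * t) := by
      rw [red, Polynomial.map_add]
    rw [h1, red_two_mul, add_zero, hr₀red]

end Z4aux

namespace Z4aux

lemma coprime_of_sqf {q r : (ZMod 2)[X]} (h : Squarefree (q * r)) : IsCoprime q r := by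
  classical
  rw [← EuclideanDomain.gcd_isUnit_iff]
  refine h _ ?_
  exact mul_dvd_mul (EuclideanDomain.gcd_dvd_left q r) (EuclideanDomain.gcd_dvd_right q r)

lemma irred_lift {f : (ZMod 4)[X]} (hf : f.Monic) (hsq : Squarefree (red f))
    {q : (ZMod 2)[X]} (hqi : Irreducible q) (hqd : q ∣ red f) :
    ∃ P : (ZMod 4)[X], P.Monic ∧ Irreducible P ∧ P ∣ f ∧ red P = q := by
  have hq : q.Monic := by
    have hq0 : q ≠ 0 := hqi.ne_zero
    have : q.leadingCoeff ≠ 0 := Polynomial.leadingCoeff_ne_zero.2 hq0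
    have h1 : ∀ x : ZMod 2, x ≠ 0 → x = 1 := by decide
    exact h1 _ this
  obtain ⟨r, hr⟩ := hqd
  have hrm : r.Monic := hq.of_mul_monic_left (hr ▸ hf.map pr)
  have hcop : IsCoprime q r := coprime_of_sqf (hr ▸ hsq)
  obtain ⟨Q, R, hQ, hR, hfQR, hQred, hRred⟩ := hensel_factor hf hq hrm hr hcop
  refine ⟨Q, hQ, ⟨?_, ?_⟩, ⟨R, hfQR⟩, hQred⟩
  · intro hu
    have : IsUnit (red Q) := by
      simpa [red] using hu.map (Polynomial.mapRingHom pr)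
    exact hqi.not_isUnit (hQred ▸ this)
  · intro a b hab
    have hq2 : q = red a * red b := by
      rw [← hQred, hab, red, Polynomial.map_mul]
    rcases hqi.isUnit_or_isUnit hq2 with h | h
    · exact Or.inl (unit_lift h)
    · exact Or.inr (unit_lift h)

lemma red_inj {f d₁ d₂ : (ZMod 4)[X]} (hf : f.Monic) (hsq : Squarefree (red f))
    (h1 : d₁.Monic) (h2 : d₂.Monic) (hd1 : d₁ ∣ f) (hd2 : d₂ ∣ f)
    (hred : red d₁ = red d₂) : d₁ = d₂ := by
  obtain ⟨k₁, hk₁⟩ := hd1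
  obtain ⟨k₂, hk₂⟩ := hd2
  have hk₁m : k₁.Monic := h1.of_mul_monic_left (hk₁ ▸ hf)
  have hk₂m : k₂.Monic := h2.of_mul_monic_left (hk₂ ▸ hf)
  have hfd : red f = red d₁ * red k₁ := by rw [hk₁, red, Polynomial.map_mul]
  have hfd2 : red f = red d₂ * red k₂ := by rw [hk₂, red, Polynomial.map_mul]
  have hrk : red k₁ = red k₂ :=
    mul_left_cancel₀ ((h1.map pr).ne_zero) (by rw [← hfd, hfd2, ← hred])
  have hcop : IsCoprime (red d₁) (red k₁) := coprime_of_sqf (hfd ▸ hsq)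
  obtain ⟨a, ha⟩ := (red_zero_iff (d₂ - d₁)).1
    (by rw [red, Polynomial.map_sub, sub_eq_zero]; exact hred.symm)
  obtain ⟨b, hb⟩ := (red_zero_iff (k₂ - k₁)).1
    (by rw [red, Polynomial.map_sub, sub_eq_zero]; exact hrk.symm)
  have h4 := four_eq_zero
  have hd₂ : d₂ = d₁ + 2 * a := by linear_combination ha
  have hk₂' : k₂ = k₁ + 2 * b := by linear_combination hb
  have heq : d₁ * k₁ = (d₁ + 2 * a) * (k₁ + 2 * b) := by
    rw [← hd₂, ← hk₂', ← hk₁, ← hk₂]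
  have hzero : 2 * (a * k₁ + b * d₁) = 0 := by
    linear_combination -heq - a * b * h4
  have hred0 : red (a * k₁ + b * d₁) = 0 := (two_mul_eq_zero_iff _).1 hzero
  have hdvd : red d₁ ∣ red a * red k₁ := by
    refine ⟨-red b, ?_⟩
    have : red a * red k₁ + red b * red d₁ = 0 := by
      have := hred0
      rw [red, Polynomial.map_add, Polynomial.map_mul, Polynomial.map_mul] at this
      exact this
    linear_combination this
  obtain ⟨mbar, hmbar⟩ := hcop.dvd_of_dvd_mul_right hdvd
  obtain ⟨m, hm⟩ := red_surjective mbar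
  have h2a : 2 * a = 2 * (d₁ * m) := by
    refine two_mul_congr ?_
    have hx : red (d₁ * m) = red d₁ * red m := by rw [red, Polynomial.map_mul]
    rw [hx, hm]; exact hmbar
  have hw : d₂ - d₁ = d₁ * (2 * m) := by linear_combination ha + h2a
  by_cases hw0 : d₂ - d₁ = 0
  · exact (sub_eq_zero.1 hw0).symm
  · exfalso
    have hnd : d₁.natDegree = d₂.natDegree := by
      rw [← h1.natDegree_map pr, ← h2.natDegree_map pr]
      rw [red] at hred; rw [hred]
    have hdeg1 : (d₂ - d₁).degree < d₁.degree := by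
      have hdd : d₂.degree = d₁.degree := by
        rw [Polynomial.degree_eq_natDegree h2.ne_zero,
            Polynomial.degree_eq_natDegree h1.ne_zero, hnd]
      have := Polynomial.degree_sub_lt hdd h2.ne_zero
        (by rw [h2.leadingCoeff, h1.leadingCoeff])
      rwa [hdd] at this
    have h2m0 : 2 * m ≠ 0 := by
      intro h0; rw [h0, mul_zero] at hw; exact hw0 hw
    have hdeg2 : (d₂ - d₁).degree = (2 * m).degree + d₁.degree := by
      rw [hw, mul_comm, h1.degree_mul]
    have : d₁.degree ≤ (d₂ - d₁).degree := by
      rw [hdeg2]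
      calc d₁.degree = 0 + d₁.degree := by rw [zero_add]
        _ ≤ (2 * m).degree + d₁.degree :=
          add_le_add_left (Polynomial.zero_le_degree_iff.2 h2m0) _
    exact absurd hdeg1 (not_lt.2 this)

end Z4aux

namespace Z4aux

lemma sqf_dvd_of_primes (b : (ZMod 2)[X]) (a : (ZMod 2)[X]) :
    Squarefree a → (∀ p : (ZMod 2)[X], Prime p → p ∣ a → p ∣ b) → a ∣ b := by
  refine UniqueFactorizationMonoid.induction_on_prime a ?_ ?_ ?_
  · intro hsq _; exact absurd hsq not_squarefree_zero
  · intro x hx _ _; exact hx.dvd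
  · intro x p hx hp ih hsq hpr
    have hpb : p ∣ b := hpr p hp (Dvd.intro _ rfl)
    have hxsq : Squarefree x := hsq.squarefree_of_dvd (dvd_mul_left x p)
    have hxb : x ∣ b := ih hxsq (fun q hq hqx => hpr q hq (hqx.mul_left p))
    have hnpx : ¬ p ∣ x := by
      intro hpx
      exact hp.not_unit (hsq p (mul_dvd_mul (dvd_refl p) hpx))
    have hcp : IsCoprime p x := (hp.coprime_iff_not_dvd).2 hnpx
    exact hcp.mul_dvd hpb hxb

lemma sqf_eq_of_primes {a b : (ZMod 2)[X]} (hma : a.Monic) (hmb : b.Monic)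
    (ha : Squarefree a) (hb : Squarefree b)
    (hiff : ∀ p : (ZMod 2)[X], Prime p → (p ∣ a ↔ p ∣ b)) : a = b :=
  Polynomial.eq_of_monic_of_associated hma hmb
    (associated_of_dvd_dvd (sqf_dvd_of_primes b a ha fun p hp hd => (hiff p hp).1 hd)
      (sqf_dvd_of_primes a b hb fun p hp hd => (hiff p hp).2 hd))

lemma red_XN (N : ℕ) : red ((X : (ZMod 4)[X])^N - 1) = (X : (ZMod 2)[X])^N - 1 := by
  rw [red, Polynomial.map_sub, Polynomial.map_pow, Polynomial.map_X, Polynomial.map_one]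

lemma sqf_XN {N : ℕ} (hN : Odd N) : Squarefree ((X : (ZMod 2)[X])^N - 1) := by
  have h2 : ((N : ZMod 2)) ≠ 0 := by
    rw [Ne, ZMod.natCast_eq_zero_iff]
    intro hdvd
    have := Nat.odd_iff.1 hN
    omega
  have hsep := Polynomial.separable_X_pow_sub_C (1 : ZMod 2) h2 one_ne_zero
  have hsq := hsep.squarefree
  simpa using hsq

lemma monic_XN {N : ℕ} (hN : N ≠ 0) : ((X : (ZMod 4)[X])^N - 1).Monic := by
  have := Polynomial.monic_X_pow_sub_C (1 : ZMod 4) hN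
  simpa using this

-- reciprocal lemmas
lemma coeff0_unit {a : ZMod 4} {b : ZMod 4} (hab : a * b = 3) : IsUnit a :=
  IsUnit.of_mul_eq_one (a := a) (-b) (by
    have : a * b = 3 := hab
    have h3 : (3 : ZMod 4) = -1 := by decide
    rw [h3] at this
    linear_combination -this)

lemma recip_monic {f : (ZMod 4)[X]} (hf : f.Monic) (hu : IsUnit (f.coeff 0)) :
    (recip f).Monic ∧ (recip f).natDegree = f.natDegree := by
  have hc0 : f.coeff 0 ≠ 0 := by
    intro h0; rw [h0] at hu; exact (by decide : ¬ IsUnit (0 : ZMod 4)) hu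
  have htd : f.natTrailingDegree = 0 :=
    Polynomial.natTrailingDegree_eq_zero.2 (Or.inr hc0)
  have htc : f.reverse.leadingCoeff = f.coeff 0 := by
    rw [Polynomial.reverse_leadingCoeff, Polynomial.trailingCoeff, htd]
  have hinv : (f.coeff 0)⁻¹ * f.coeff 0 = 1 := ZMod.inv_mul_of_unit _ hu
  have hlc : (C (f.coeff 0)⁻¹).leadingCoeff * f.reverse.leadingCoeff ≠ 0 := by
    rw [Polynomial.leadingCoeff_C, htc, hinv]; exact one_ne_zero
  constructor
  · unfold recip Polynomial.Monic
    rw [Polynomial.leadingCoeff_mul' hlc, Polynomial.leadingCoeff_C, htc, hinv]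
  · unfold recip
    rw [Polynomial.natDegree_mul' hlc, Polynomial.natDegree_C, zero_add,
      Polynomial.reverse_natDegree, htd, Nat.sub_zero]

lemma inv_three : (3 : ZMod 4)⁻¹ = 3 := by
  have h := ZMod.inv_mul_of_unit (3 : ZMod 4) (IsUnit.of_mul_eq_one (a := (3 : ZMod 4)) 3 (by decide))
  calc (3:ZMod 4)⁻¹ = 3⁻¹ * (3 * 3) := by rw [show (3:ZMod 4)*3 = 1 by decide, mul_one]
    _ = (3⁻¹ * 3) * 3 := by ring
    _ = 3 := by rw [h, one_mul]

lemma inv_one' : (1 : ZMod 4)⁻¹ = 1 := by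
  have h := ZMod.inv_mul_of_unit (1 : ZMod 4) isUnit_one
  calc (1:ZMod 4)⁻¹ = 1⁻¹ * 1 := (mul_one _).symm
    _ = 1 := h

lemma recip_mul {f g : (ZMod 4)[X]} (hf : f.Monic) (hg : g.Monic)
    (h0 : f.coeff 0 * g.coeff 0 = 3) : recip (f * g) = recip f * recip g := by
  have hrev : (f * g).reverse = f.reverse * g.reverse :=
    Polynomial.reverse_mul (by rw [hf.leadingCoeff, hg.leadingCoeff]; norm_num)
  have hcase : ∀ a b : ZMod 4, a * b = 3 → (a = 1 ∧ b = 3) ∨ (a = 3 ∧ b = 1) := by decide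
  have hinv : (f.coeff 0 * g.coeff 0)⁻¹ = (f.coeff 0)⁻¹ * (g.coeff 0)⁻¹ := by
    rcases hcase _ _ h0 with ⟨h1, h2⟩ | ⟨h1, h2⟩ <;> rw [h1, h2]
    · rw [show (1:ZMod 4) * 3 = 3 by decide, inv_three, inv_one', one_mul]
    · rw [show (3:ZMod 4) * 1 = 3 by decide, inv_three, inv_one', mul_one]
  unfold recip
  rw [Polynomial.mul_coeff_zero, hrev, hinv, map_mul]
  ring

lemma recip_XN {N : ℕ} (hN : N ≠ 0) :
    recip ((X : (ZMod 4)[X])^N - 1) = (X : (ZMod 4)[X])^N - 1 := by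
  have hc0 : ((X : (ZMod 4)[X])^N - 1).coeff 0 = 3 := by
    rw [Polynomial.coeff_sub, Polynomial.coeff_X_pow, Polynomial.coeff_one]
    simp [hN, Ne.symm hN]
    decide
  have hrev : ((X : (ZMod 4)[X])^N - 1).reverse = 1 - X^N := by
    unfold Polynomial.reverse
    rw [show ((X : (ZMod 4)[X])^N - 1) = X^N - C 1 by rw [map_one],
      Polynomial.natDegree_X_pow_sub_C, Polynomial.reflect_sub,
      Polynomial.reflect_C, Polynomial.reflect_monomial, Polynomial.revAt_le (le_refl N)]
    simp
  unfold recip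
  rw [hc0, hrev, inv_three,
    show (C (3 : ZMod 4)) = 3 by rw [← map_ofNat (Polynomial.C : ZMod 4 →+* (ZMod 4)[X]) 3]]
  linear_combination (1 - (X:(ZMod 4)[X])^N) * four_eq_zero

end Z4aux

namespace Z4aux

lemma red_dvd {a b : (ZMod 4)[X]} (hab : a ∣ b) : red a ∣ red b := by
  obtain ⟨c, rfl⟩ := hab
  exact ⟨red c, by rw [red, Polynomial.map_mul]⟩

lemma red_mul (a b : (ZMod 4)[X]) : red (a * b) = red a * red b := by
  rw [red, Polynomial.map_mul]

end Z4aux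

open Z4aux in
theorem g_eq_one_of_factors_union (N : ℕ) (hN : Odd N) (g h : (ZMod 4)[X])
    (hg : g.Monic) (hh : h.Monic)
    (hgdvd : g ∣ (X : (ZMod 4)[X]) ^ N - 1) (hhdvd : h ∣ (X : (ZMod 4)[X]) ^ N - 1)
    (hcop : IsCoprime g h)
    (hfact : {p : (ZMod 4)[X] | p.Monic ∧ Irreducible p ∧ p ∣ recip h} =
      {p : (ZMod 4)[X] | p.Monic ∧ Irreducible p ∧ p ∣ g} ∪
        {p : (ZMod 4)[X] | p.Monic ∧ Irreducible p ∧ p ∣ h}) :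
    g = 1 ∧ recip h = h := by
  have hN0 : N ≠ 0 := by rintro rfl; simp [Nat.odd_iff] at hN
  set F : (ZMod 4)[X] := X ^ N - 1 with hF
  have hFm : F.Monic := monic_XN hN0
  have hFsq : Squarefree (red F) := by rw [hF, red_XN]; exact sqf_XN hN
  obtain ⟨k, hk⟩ := hhdvd
  have hkm : k.Monic := hh.of_mul_monic_left (hk ▸ hFm)
  have hF0 : F.coeff 0 = 3 := by
    rw [hF, Polynomial.coeff_sub, Polynomial.coeff_X_pow, Polynomial.coeff_one]
    simp [hN0, Ne.symm hN0]
    decide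
  have hc30 : h.coeff 0 * k.coeff 0 = 3 := by
    have hcc := congrArg (fun p => Polynomial.coeff p 0) hk
    simp only [Polynomial.mul_coeff_zero] at hcc
    rw [← hcc]; exact hF0
  have hhu : IsUnit (h.coeff 0) := coeff0_unit hc30
  obtain ⟨hrm, hrd⟩ := recip_monic hh hhu
  have hFrec : F = recip h * recip k := by
    rw [← recip_mul hh hkm hc30, ← hk, hF, recip_XN hN0]
  have hrdvd : recip h ∣ F := ⟨recip k, hFrec⟩
  have hsqA : Squarefree (red (recip h)) := hFsq.squarefree_of_dvd (red_dvd hrdvd)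
  have hsqg : Squarefree (red g) := hFsq.squarefree_of_dvd (red_dvd hgdvd)
  have hsqh : Squarefree (red h) := hFsq.squarefree_of_dvd (red_dvd ⟨k, hk⟩)
  have key : ∀ p : (ZMod 2)[X], Prime p → (p ∣ red (recip h) ↔ p ∣ red g * red h) := by
    intro p hp
    have hpi : Irreducible p := hp.irreducible
    constructor
    · intro hpd
      obtain ⟨P, hPm, hPi, hPd, hPred⟩ := irred_lift hrm hsqA hpi hpd
      have hmem : P ∈ {p : (ZMod 4)[X] | p.Monic ∧ Irreducible p ∧ p ∣ recip h} :=
        ⟨hPm, hPi, hPd⟩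
      rw [hfact] at hmem
      rcases hmem with ⟨_, _, hPg⟩ | ⟨_, _, hPh⟩
      · exact dvd_mul_of_dvd_left (hPred ▸ red_dvd hPg) _
      · exact dvd_mul_of_dvd_right (hPred ▸ red_dvd hPh) _
    · intro hpd
      rcases hp.dvd_or_dvd hpd with hg' | hh'
      · obtain ⟨P, hPm, hPi, hPd, hPred⟩ := irred_lift hg hsqg hpi hg'
        have hmem : P ∈ {p : (ZMod 4)[X] | p.Monic ∧ Irreducible p ∧ p ∣ recip h} := by
          rw [hfact]; exact Or.inl ⟨hPm, hPi, hPd⟩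
        exact hPred ▸ red_dvd hmem.2.2
      · obtain ⟨P, hPm, hPi, hPd, hPred⟩ := irred_lift hh hsqh hpi hh'
        have hmem : P ∈ {p : (ZMod 4)[X] | p.Monic ∧ Irreducible p ∧ p ∣ recip h} := by
          rw [hfact]; exact Or.inr ⟨hPm, hPi, hPd⟩
        exact hPred ▸ red_dvd hmem.2.2
  have hghdvd : g * h ∣ F := hcop.mul_dvd hgdvd ⟨k, hk⟩
  have hsqB : Squarefree (red g * red h) := by
    rw [← red_mul]; exact hFsq.squarefree_of_dvd (red_dvd hghdvd)
  have hAB : red (recip h) = red g * red h :=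
    sqf_eq_of_primes (hrm.map pr) ((hg.map pr).mul (hh.map pr)) hsqA hsqB key
  have hdeg : h.natDegree = g.natDegree + h.natDegree := by
    have h1 : (red (recip h)).natDegree = h.natDegree := by
      rw [hrm.natDegree_map pr, hrd]
    have h2 : (red g * red h).natDegree = g.natDegree + h.natDegree := by
      rw [Polynomial.Monic.natDegree_mul (hg.map pr) (hh.map pr),
        hg.natDegree_map pr, hh.natDegree_map pr]
    calc h.natDegree = (red (recip h)).natDegree := h1.symm
      _ = (red g * red h).natDegree := by rw [hAB]
      _ = g.natDegree + h.natDegree := h2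
  have hg0 : g.natDegree = 0 := by omega
  have hg1 : g = 1 := hg.natDegree_eq_zero.1 hg0
  refine ⟨hg1, ?_⟩
  have hredeq : red (recip h) = red h := by
    rw [hAB, hg1]
    simp [red]
  exact red_inj hFm hFsq hrm hh hrdvd ⟨k, hk⟩ hredeq
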